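/- Let (a_j)_{j∈ℕ} be a sequence of real numbers and C ≥ 0 with |a_j| ≤ C(1+j) for all j ∈ ℕ. For k ∈ ℕ set b_k := ∑_{j=0}^{k} (−1)^{k−j} binom(k,j) a_j. Then for every t ≥ 0, the series ∑_{j=0}^∞ (t^j/j!) a_j and ∑_{k=0}^∞ (t^k/k!) b_k both converge absolutely, and e^{−t} ∑_{j=0}^∞ (t^j/j!) a_j = ∑_{k=0}^∞ (t^k/k!) b_k. -/

import Mathlib

open Finset

lemma aux_summable_exp16 (t : ℝ) :
    Summable (fun j : ℕ => (1 + (j : ℝ)) * t ^ j / j.factorial) := by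
  have h1 := Real.summable_pow_div_factorial t
  have h2 : Summable (fun j : ℕ => (j : ℝ) * t ^ j / j.factorial) := by
    rw [← summable_nat_add_iff 1]
    refine Summable.congr (h1.mul_left t) ?_
    intro n
    have h0 : (n.factorial : ℝ) ≠ 0 := Nat.cast_ne_zero.2 n.factorial_ne_zero
    rw [Nat.factorial_succ]
    push_cast
    field_simp
    ring
  refine Summable.congr (h1.add h2) ?_
  intro n
  ring

/-- if `|a_j| ≤ C(1+j)` and
`b_k = ∑_{j=0}^{k} (−1)^{k−j} binom(k,j) a_j`, then for every `t ≥ 0` the series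
`∑ (t^j/j!) a_j` and `∑ (t^k/k!) b_k` converge absolutely, and
`e^{−t} ∑_j (t^j/j!) a_j = ∑_k (t^k/k!) b_k`. -/
theorem exponential_forward_difference_identity
    (a : ℕ → ℝ) (C : ℝ) (hC : 0 ≤ C) (hbd : ∀ j : ℕ, |a j| ≤ C * (1 + (j : ℝ))) :
    ∀ t : ℝ, 0 ≤ t →
      Summable (fun j : ℕ => |t ^ j / (Nat.factorial j : ℝ) * a j|) ∧
      Summable (fun k : ℕ => |t ^ k / (Nat.factorial k : ℝ) *
        ∑ j ∈ Finset.range (k + 1), (-1 : ℝ) ^ (k - j) * (k.choose j : ℝ) * a j|) ∧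
      Real.exp (-t) * ∑' j : ℕ, t ^ j / (Nat.factorial j : ℝ) * a j =
        ∑' k : ℕ, t ^ k / (Nat.factorial k : ℝ) *
          ∑ j ∈ Finset.range (k + 1), (-1 : ℝ) ^ (k - j) * (k.choose j : ℝ) * a j := by
  intro t ht
  set f : ℕ → ℝ := fun j => t ^ j / j.factorial * a j with hf_def
  set e : ℕ → ℝ := fun i => (-t) ^ i / i.factorial with he_def
  -- summability of the a-series
  have hf : Summable (fun j : ℕ => ‖f j‖) := by
    refine Summable.of_nonneg_of_le (fun j => norm_nonneg _) ?_
      ((aux_summable_exp16 t).mul_left C)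
    intro j
    have hfac : (0 : ℝ) < j.factorial := by positivity
    rw [Real.norm_eq_abs, hf_def, abs_mul,
      abs_of_nonneg (by positivity : (0:ℝ) ≤ t ^ j / j.factorial)]
    calc t ^ j / j.factorial * |a j|
        ≤ t ^ j / j.factorial * (C * (1 + j)) := by
          exact mul_le_mul_of_nonneg_left (hbd j) (by positivity)
      _ = C * ((1 + (j : ℝ)) * t ^ j / j.factorial) := by ring
  have he : Summable (fun i : ℕ => ‖e i‖) := by
    refine Summable.congr (Real.summable_pow_div_factorial t) ?_
    intro i
    have hfac : (0 : ℝ) < i.factorial := by positivity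
    rw [Real.norm_eq_abs, he_def, abs_div, abs_pow, abs_neg, abs_of_nonneg ht,
      abs_of_pos hfac]
  -- key algebraic identity
  have hkey : ∀ k : ℕ, ∑ p ∈ antidiagonal k, f p.1 * e p.2 =
      t ^ k / (Nat.factorial k : ℝ) *
        ∑ j ∈ Finset.range (k + 1), (-1 : ℝ) ^ (k - j) * (k.choose j : ℝ) * a j := by
    intro k
    rw [Finset.Nat.sum_antidiagonal_eq_sum_range_succ (fun i j => f i * e j) k,
      Finset.mul_sum]
    refine Finset.sum_congr rfl ?_
    intro j hj
    have hjk : j ≤ k := Nat.lt_succ_iff.mp (Finset.mem_range.mp hj)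
    have hc : ((k.choose j : ℕ) : ℝ) * (j.factorial : ℝ) * ((k - j).factorial : ℝ)
        = (k.factorial : ℝ) := by exact_mod_cast Nat.choose_mul_factorial_mul_factorial hjk
    have htk : t ^ j * t ^ (k - j) = t ^ k := by
      rw [← pow_add, Nat.add_sub_cancel' hjk]
    have h1 : (j.factorial : ℝ) ≠ 0 := Nat.cast_ne_zero.2 j.factorial_ne_zero
    have h2 : ((k - j).factorial : ℝ) ≠ 0 := Nat.cast_ne_zero.2 (k - j).factorial_ne_zero
    have h3 : (k.factorial : ℝ) ≠ 0 := Nat.cast_ne_zero.2 k.factorial_ne_zero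
    simp only [hf_def, he_def]
    rw [neg_pow t (k - j)]
    field_simp
    linear_combination (a j * (k.factorial : ℝ)) * htk
      - (a j * t ^ k) * hc
  have hsum2 : Summable (fun k : ℕ => ‖∑ p ∈ antidiagonal k, f p.1 * e p.2‖) :=
    summable_norm_sum_mul_antidiagonal_of_summable_norm hf he
  refine ⟨hf.congr fun j => (Real.norm_eq_abs _).symm ▸ rfl, ?_, ?_⟩
  · refine hsum2.congr ?_
    intro k
    rw [hkey k, Real.norm_eq_abs]
  · have hexp : (∑' i : ℕ, e i) = Real.exp (-t) := by
      rw [Real.exp_eq_exp_ℝ, NormedSpace.exp_eq_tsum_div]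
    have hprod := tsum_mul_tsum_eq_tsum_sum_antidiagonal_of_summable_norm hf he
    calc Real.exp (-t) * ∑' j : ℕ, f j = (∑' j : ℕ, f j) * ∑' i : ℕ, e i := by
          rw [hexp]; ring
      _ = ∑' k : ℕ, ∑ p ∈ antidiagonal k, f p.1 * e p.2 := hprod
      _ = _ := tsum_congr hkey
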